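/- Let f be a finite partial function from ℕ to ℕ and let Ξ be a family of completions of f which blocks at width n for some n ≥ 1. Then there exists a total function f^∞ : ℕ → ℕ with f ⊆ f^∞ such that every finite partial function g with f ⊆ g ⊆ f^∞ belongs to Ξ. -/

import Mathlib

/-- A partial function from ℕ to ℕ, represented via `Option`. -/
def PFn := ℕ → Option ℕ

/-- The domain of a partial function. -/
def PFn.dom (f : PFn) : Set ℕ := {x | f x ≠ none}

/-- `f` has finite domain (i.e. `f ∈ ω^{⊂ω}`). -/
def PFn.FinDom (f : PFn) : Prop := f.dom.Finite

/-- `PExt f g` means `f ⊆ g` as partial functions. -/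
def PExt (f g : PFn) : Prop := ∀ x y, f x = some y → g x = some y

/-- `Branching n f k U`: `U` is an `n`-branching set of extensions of `f` of length `k`. -/
inductive Branching (n : ℕ) : PFn → ℕ → Set PFn → Prop
  | base (f : PFn) (x : ℕ) (U : Set PFn) (hx : f x = none)
      (hmem : ∀ g ∈ U, PExt f g ∧ PFn.dom g = PFn.dom f ∪ {x})
      (hcard : U.ncard = n) : Branching n f 1 U
  | step (f : PFn) (k : ℕ) (U₀ : Set PFn) (Ug : PFn → Set PFn)
      (h₀ : Branching n f k U₀)
      (hg : ∀ g ∈ U₀, Branching n g 1 (Ug g)) :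
      Branching n f (k + 1) (⋃ g ∈ U₀, Ug g)

/-- `U` is an `n`-branching set of extensions of `f` (of some length `k ≥ 1`). -/
def IsBranching (n : ℕ) (f : PFn) (U : Set PFn) : Prop := ∃ k, 1 ≤ k ∧ Branching n f k U

/-- `Xi` is a family of completions of `f`. -/
def FamilyOfCompletions (f : PFn) (Xi : Set PFn) : Prop :=
  (∀ g ∈ Xi, PExt f g) ∧ (∀ g ∈ Xi, ∀ h, PExt f h → PExt h g → h ∈ Xi)

/-- `Xi` blocks at width `n`: every `n`-branching set of extensions of `f` meets `Xi`. -/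
def Blocks (f : PFn) (Xi : Set PFn) (n : ℕ) : Prop :=
  ∀ U, IsBranching n f U → (U ∩ Xi).Nonempty

/-- The members of `Xi` extending `g`. -/
def Restrict (Xi : Set PFn) (g : PFn) : Set PFn := {h ∈ Xi | PExt g h}

section Helpers

lemma pext_refl (f : PFn) : PExt f f := fun _ _ h => h

lemma pext_trans {f g h : PFn} (h1 : PExt f g) (h2 : PExt g h) : PExt f h :=
  fun x y hx => h2 x y (h1 x y hx)

/-- Update a partial function at one point. -/
def PFn.upd (f : PFn) (x y : ℕ) : PFn := fun z => if z = x then some y else f z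

lemma upd_self (f : PFn) (x y : ℕ) : f.upd x y x = some y := by simp [PFn.upd]

lemma pext_upd {f : PFn} {x : ℕ} (hx : f x = none) (y : ℕ) : PExt f (f.upd x y) := by
  intro z w hz
  unfold PFn.upd
  rcases eq_or_ne z x with rfl | h
  · rw [hx] at hz; cases hz
  · simp [h, hz]

lemma upd_dom (f : PFn) (x y : ℕ) : (f.upd x y).dom = f.dom ∪ {x} := by
  ext z
  by_cases h : z = x
  · subst h; simp [PFn.dom, PFn.upd]
  · simp [PFn.dom, PFn.upd, h]

lemma upd_findom {f : PFn} (hf : f.FinDom) (x y : ℕ) : (f.upd x y).FinDom := by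
  unfold PFn.FinDom
  rw [upd_dom]
  exact hf.union (Set.finite_singleton x)

lemma exists_fresh {f : PFn} (hf : f.FinDom) : ∃ x, f x = none := by
  obtain ⟨x, hx⟩ := hf.infinite_compl.nonempty
  refine ⟨x, ?_⟩
  by_contra hc
  exact hx (by simpa [PFn.dom] using hc)

lemma branching_pext {n : ℕ} {f : PFn} {k : ℕ} {U : Set PFn} (h : Branching n f k U) :
    ∀ g ∈ U, PExt f g := by
  induction h with
  | base f x U hx hmem hcard => exact fun g hg => (hmem g hg).1
  | step f k U₀ Ug h₀ hg ih₀ ihg =>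
    intro g hgU
    simp only [Set.mem_iUnion] at hgU
    obtain ⟨g₀, hg₀, hgin⟩ := hgU
    exact pext_trans (ih₀ g₀ hg₀) (ihg g₀ hg₀ g hgin)

lemma branching_findom {n : ℕ} {f : PFn} {k : ℕ} {U : Set PFn} (h : Branching n f k U) :
    f.FinDom → ∀ g ∈ U, g.FinDom := by
  induction h with
  | base f x U hx hmem hcard =>
    intro hf g hg
    unfold PFn.FinDom
    rw [(hmem g hg).2]
    exact hf.union (Set.finite_singleton x)
  | step f k U₀ Ug h₀ hg ih₀ ihg =>
    intro hf g hgU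
    simp only [Set.mem_iUnion] at hgU
    obtain ⟨g₀, hg₀, hgin⟩ := hgU
    exact ihg g₀ hg₀ (ih₀ hf g₀ hg₀) g hgin

lemma branching_one {n : ℕ} {f : PFn} {x : ℕ} (hx : f x = none) :
    Branching n f 1 ((fun y => f.upd x y) '' Set.Iio n) := by
  apply Branching.base f x _ hx
  · rintro g ⟨y, hy, rfl⟩
    exact ⟨pext_upd hx y, upd_dom f x y⟩
  · have hinj : Function.Injective (fun y => f.upd x y) := by
      intro a b hab
      have h1 := congrFun hab x
      simpa [PFn.upd] using h1
    rw [Set.ncard_image_of_injective _ hinj, ← Finset.coe_range, Set.ncard_coe_finset,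
      Finset.card_range]

lemma pad_one {n : ℕ} {f : PFn} (hf : f.FinDom) {k : ℕ} {U : Set PFn}
    (h : Branching n f k U) :
    ∃ U', Branching n f (k + 1) U' ∧ ∀ h' ∈ U', ∃ h₀ ∈ U, PExt h₀ h' := by
  have hfd := branching_findom h hf
  have hch : ∀ g : PFn, ∃ V : Set PFn, g ∈ U → Branching n g 1 V := by
    intro g
    by_cases hg : g ∈ U
    · obtain ⟨x, hx⟩ := exists_fresh (hfd g hg)
      exact ⟨_, fun _ => branching_one hx⟩
    · exact ⟨∅, fun h' => absurd h' hg⟩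
  choose V hV using hch
  refine ⟨⋃ g ∈ U, V g, Branching.step f k U V h (fun g hg => hV g hg), ?_⟩
  intro h' hh'
  simp only [Set.mem_iUnion] at hh'
  obtain ⟨g, hg, hmem⟩ := hh'
  exact ⟨g, hg, branching_pext (hV g hg) h' hmem⟩

lemma pad {n : ℕ} {f : PFn} (hf : f.FinDom) {k : ℕ} {U : Set PFn}
    (h : Branching n f k U) : ∀ m, k ≤ m →
    ∃ U', Branching n f m U' ∧ ∀ h' ∈ U', ∃ h₀ ∈ U, PExt h₀ h' := by
  intro m hm
  induction m, hm using Nat.le_induction with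
  | base => exact ⟨U, h, fun h' hh' => ⟨h', hh', pext_refl h'⟩⟩
  | succ m hm ih =>
    obtain ⟨U', hU', hcov⟩ := ih
    obtain ⟨U'', hU'', hcov'⟩ := pad_one hf hU'
    refine ⟨U'', hU'', fun h' hh' => ?_⟩
    obtain ⟨h₁, hh₁, hext₁⟩ := hcov' h' hh'
    obtain ⟨h₀, hh₀, hext₀⟩ := hcov h₁ hh₁
    exact ⟨h₀, hh₀, pext_trans hext₀ hext₁⟩

lemma branching_inv {n : ℕ} {f : PFn} {k : ℕ} {U : Set PFn} (h : Branching n f k U) :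
    k = 1 ∨ ∃ (V₀ : Set PFn) (W : PFn → Set PFn) (m : ℕ), k = m + 1 ∧
      Branching n f m V₀ ∧ (∀ g ∈ V₀, Branching n g 1 (W g)) ∧ U = ⋃ g ∈ V₀, W g := by
  cases h with
  | base => left; rfl
  | step f k V₀ W hb hw => exact Or.inr ⟨V₀, W, k, rfl, hb, hw, rfl⟩

lemma comp {n : ℕ} : ∀ m, 1 ≤ m → ∀ (f : PFn) (k : ℕ) (U₀ : Set PFn) (V : PFn → Set PFn),
    Branching n f k U₀ → (∀ g ∈ U₀, Branching n g m (V g)) →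
    ∃ U, Branching n f (k + m) U ∧ U ⊆ ⋃ g ∈ U₀, V g := by
  intro m hm
  induction m, hm using Nat.le_induction with
  | base =>
    intro f k U₀ V h0 hV
    exact ⟨⋃ g ∈ U₀, V g, Branching.step f k U₀ V h0 hV, subset_rfl⟩
  | succ m hm ih =>
    intro f k U₀ V h0 hV
    have hinv : ∀ g : PFn, ∃ (V₀ : Set PFn) (W : PFn → Set PFn), g ∈ U₀ →
        Branching n g m V₀ ∧ (∀ h ∈ V₀, Branching n h 1 (W h)) ∧ V g = ⋃ h ∈ V₀, W h := by
      intro g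
      by_cases hg : g ∈ U₀
      · rcases branching_inv (hV g hg) with h1 | ⟨V₀, W, m', hm', hb', hw', hU'⟩
        · omega
        · have : m' = m := by omega
          subst this
          exact ⟨V₀, W, fun _ => ⟨hb', hw', hU'⟩⟩
      · exact ⟨∅, fun _ => ∅, fun h' => absurd h' hg⟩
    choose V₀ W hVW using hinv
    obtain ⟨U', hU', hsub⟩ := ih f k U₀ V₀ h0 (fun g hg => (hVW g hg).1)
    have hGex : ∀ h : PFn, ∃ g : PFn, h ∈ U' → g ∈ U₀ ∧ h ∈ V₀ g := by
      intro h
      by_cases hh : h ∈ U'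
      · have := hsub hh
        simp only [Set.mem_iUnion] at this
        obtain ⟨g, hg, hmem⟩ := this
        exact ⟨g, fun _ => ⟨hg, hmem⟩⟩
      · exact ⟨f, fun h' => absurd h' hh⟩
    choose G hG using hGex
    refine ⟨⋃ h ∈ U', W (G h) h,
      Branching.step f (k + m) U' (fun h => W (G h) h) hU'
        (fun h hh => ((hVW (G h) (hG h hh).1).2.1) h (hG h hh).2), ?_⟩
    intro h' hh'
    simp only [Set.mem_iUnion] at hh' ⊢
    obtain ⟨h, hh, hmem⟩ := hh'
    refine ⟨G h, (hG h hh).1, ?_⟩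
    rw [(hVW (G h) (hG h hh).1).2.2]
    simp only [Set.mem_iUnion]
    exact ⟨h, (hG h hh).2, hmem⟩

lemma key_lemma {f f' : PFn} {Xi : Set PFn} {n : ℕ} (hn : 1 ≤ n)
    (hXi : FamilyOfCompletions f Xi) (hff' : PExt f f') (hf' : f'.FinDom)
    (hb : Blocks f' (Restrict Xi f') n) {x : ℕ} (hx : f' x = none) :
    ∃ y, Blocks (f'.upd x y) (Restrict Xi (f'.upd x y)) n := by
  by_contra hcon
  push_neg at hcon
  have h1 : ∀ y, ∃ U, IsBranching n (f'.upd x y) U ∧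
      ∀ h ∈ U, h ∉ Restrict Xi (f'.upd x y) := by
    intro y
    have := hcon y
    unfold Blocks at this
    push_neg at this
    obtain ⟨U, hU1, hU2⟩ := this
    rw [Set.eq_empty_iff_forall_notMem] at hU2
    exact ⟨U, hU1, fun h hh hmem => hU2 h ⟨hh, hmem⟩⟩
  choose Uy hUy hdisj using h1
  choose ky hky hbr using hUy
  set K := (Finset.range n).sup ky with hK
  have hK1 : 1 ≤ K :=
    le_trans (hky 0) (Finset.le_sup (Finset.mem_range.mpr hn))
  have hpad : ∀ y, ∃ U', y < n →
      Branching n (f'.upd x y) K U' ∧ ∀ h' ∈ U', ∃ h₀ ∈ Uy y, PExt h₀ h' := by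
    intro y
    by_cases hy : y < n
    · obtain ⟨U', h1, h2⟩ := pad (upd_findom hf' x y) (hbr y) K
        (Finset.le_sup (Finset.mem_range.mpr hy))
      exact ⟨U', fun _ => ⟨h1, h2⟩⟩
    · exact ⟨∅, fun h' => absurd h' hy⟩
  choose U' hU' using hpad
  have hU₀ : Branching n f' 1 ((fun y => f'.upd x y) '' Set.Iio n) := branching_one hx
  have hVbr : ∀ g ∈ (fun y => f'.upd x y) '' Set.Iio n,
      Branching n g K (U' ((g x).getD 0)) := by
    rintro g ⟨y, hy, rfl⟩
    simp only [upd_self, Option.getD_some]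
    exact (hU' y hy).1
  obtain ⟨U, hU, hsub⟩ := comp K hK1 f' 1 _ (fun g => U' ((g x).getD 0)) hU₀ hVbr
  obtain ⟨h, hhU, hhXi, hhext⟩ := hb U ⟨1 + K, by omega, hU⟩
  have hmem := hsub hhU
  simp only [Set.mem_iUnion] at hmem
  obtain ⟨g, ⟨y, hy, rfl⟩, hmem⟩ := hmem
  simp only [upd_self, Option.getD_some] at hmem
  obtain ⟨h₀, hh₀, hext₀⟩ := (hU' y hy).2 h hmem
  have hpe : PExt (f'.upd x y) h₀ := branching_pext (hbr y) h₀ hh₀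
  have hfh₀ : PExt f h₀ := pext_trans hff' (pext_trans (pext_upd hx y) hpe)
  exact hdisj y h₀ hh₀ ⟨hXi.2 h hhXi h₀ hfh₀ hext₀, hpe⟩

end Helpers

theorem blocking_total_completion (f : PFn) (hf : f.FinDom) (n : ℕ) (hn : 1 ≤ n)
    (Xi : Set PFn) (hXi : FamilyOfCompletions f Xi) (hb : Blocks f Xi n) :
    ∃ F : ℕ → ℕ, (∀ x y, f x = some y → F x = y) ∧
      ∀ g : PFn, g.FinDom → PExt f g → (∀ x y, g x = some y → F x = y) → g ∈ Xi := by
  classical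
  let P : PFn → Prop := fun g => g.FinDom ∧ PExt f g ∧ Blocks g (Restrict Xi g) n
  have hPf : P f := by
    refine ⟨hf, pext_refl f, ?_⟩
    intro U hU
    obtain ⟨h, hhU, hhXi⟩ := hb U hU
    obtain ⟨k, hk, hbr⟩ := hU
    exact ⟨h, hhU, hhXi, branching_pext hbr h hhU⟩
  have step : ∀ g, P g → ∀ x, ∃ g', P g' ∧ PExt g g' ∧ g' x ≠ none := by
    intro g hg x
    rcases hgx : g x with _ | y
    · obtain ⟨y, hy⟩ := key_lemma hn hXi hg.2.1 hg.1 hg.2.2 hgx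
      exact ⟨g.upd x y, ⟨upd_findom hg.1 x y, pext_trans hg.2.1 (pext_upd hgx y), hy⟩,
        pext_upd hgx y, by rw [upd_self]; simp⟩
    · exact ⟨g, hg, pext_refl g, by rw [hgx]; simp⟩
  choose st hst using step
  let s : ℕ → {g : PFn // P g} := fun k =>
    Nat.rec (motive := fun _ => {g : PFn // P g}) ⟨f, hPf⟩
      (fun k ih => ⟨st ih.1 ih.2 k, (hst ih.1 ih.2 k).1⟩) k
  have hsS : ∀ k, (s (k + 1)).1 = st (s k).1 (s k).2 k := fun k => rfl
  have hmono : ∀ j k, j ≤ k → PExt (s j).1 (s k).1 := by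
    intro j k hjk
    induction k, hjk using Nat.le_induction with
    | base => exact pext_refl _
    | succ k hk ih =>
      refine pext_trans ih ?_
      rw [hsS k]
      exact (hst (s k).1 (s k).2 k).2.1
  have hdef : ∀ x, (s (x + 1)).1 x ≠ none := by
    intro x
    rw [hsS x]
    exact (hst (s x).1 (s x).2 x).2.2
  let F : ℕ → ℕ := fun x => ((s (x + 1)).1 x).getD 0
  have hFx : ∀ x, (s (x + 1)).1 x = some (F x) := by
    intro x
    show (s (x + 1)).1 x = some (((s (x + 1)).1 x).getD 0)
    rcases hc : (s (x + 1)).1 x with _ | y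
    · exact absurd hc (hdef x)
    · rfl
  refine ⟨F, ?_, ?_⟩
  · intro x y hxy
    have h0 : (s 0).1 x = some y := hxy
    have h1 := hmono 0 (x + 1) (by omega) x y h0
    rw [hFx x] at h1
    exact Option.some.inj h1
  · intro g hgfin hfg hgF
    obtain ⟨b, hbdd⟩ := hgfin.bddAbove
    have hgs : PExt g (s (b + 1)).1 := by
      intro x y hxy
      have hx : x ∈ g.dom := by simp [PFn.dom, hxy]
      have hxb : x ≤ b := hbdd hx
      have h1 : (s (x + 1)).1 x = some y := by rw [hFx x, hgF x y hxy]
      exact hmono (x + 1) (b + 1) (by omega) x y h1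
    obtain ⟨xf, hxf⟩ := exists_fresh (s (b + 1)).2.1
    obtain ⟨h, hhU, hhXi, hhext⟩ :=
      (s (b + 1)).2.2.2 _ ⟨1, le_refl 1, branching_one (n := n) hxf⟩
    exact hXi.2 h hhXi g hfg (pext_trans hgs hhext)
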